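/- With α = 38/15 and β = −11/228, the symbol F(t) of the α-damping scheme satisfies F(t) < 0 for all t ∈ (0, π], i.e., the scheme provides strictly negative (dissipative) amplification for all nonzero wavenumbers up to the grid frequency. -/
import Mathlib


open Real

/-- Fourier symbol of the α-damping diffusion scheme. -/
noncomputable def dampSymbol (α β t : ℝ) : ℝ :=
  -(1/6) * Real.sin (t/2) ^ 2 *
    (24*α*β + 5*α + 6*(α*(4*β-1)+2) * Real.cos t + (α-2) * Real.cos (2*t) + 14)

/-- with `α = 38/15`, `β = −11/228`, the symbol is strictly negative
for all wavenumbers `t ∈ (0, π]`. -/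
theorem dampSymbol_neg_on_Ioc :
    ∀ t ∈ Set.Ioc (0:ℝ) π, dampSymbol (38/15) (-11/228) t < 0 := by
  intro t ht
  obtain ⟨ht0, htπ⟩ := ht
  have hs : 0 < Real.sin (t/2) :=
    Real.sin_pos_of_pos_of_lt_pi (by linarith) (by nlinarith [Real.pi_pos])
  have hc := Real.neg_one_le_cos t
  have hc1 := Real.cos_le_one t
  have h2 : Real.cos (2*t) = 2 * Real.cos t ^ 2 - 1 := Real.cos_two_mul t
  have hB : 0 < 348/15 - 92/15 * Real.cos t + 16/15 * Real.cos t ^ 2 := by nlinarith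
  unfold dampSymbol
  rw [h2]
  nlinarith [mul_pos (mul_pos hs hs) hB]
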